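/- Let d ≥ 2 and let Ω be an open subset of ℝ^d. Let u, v : ℝ^d → ℝ be C² on Ω and satisfy the Helmholtz equations −Δu = E_u·u and −Δv = E_v·v on Ω with E_u ≠ E_v. Set ε := E_u − E_v and 𝓔 := E_u + E_v, and define the vector field F : Ω → ℝ^d by F(x) = ((d−2)/2)(v(x)∇u(x) + u(x)∇v(x)) + (𝓔/ε − (ε/4)‖x‖²)(v(x)∇u(x) − u(x)∇v(x)) + ((𝓔/2)u(x)v(x) − ⟨∇u(x),∇v(x)⟩)·x + ⟨x,∇u(x)⟩∇v(x) + ⟨x,∇v(x)⟩∇u(x). Then for every x ∈ Ω, div F(x) = (ε²/4)·‖x‖²·u(x)·v(x). -/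

import Mathlib

open MeasureTheory
open scoped RealInnerProductSpace Classical

noncomputable section

/-- The Euclidean Laplacian: the sum of the second partial derivatives. -/
def lap {d : ℕ} (u : EuclideanSpace ℝ (Fin d) → ℝ) (x : EuclideanSpace ℝ (Fin d)) : ℝ :=
  ∑ i, fderiv ℝ (fun y => fderiv ℝ u y (EuclideanSpace.single i (1:ℝ))) x
    (EuclideanSpace.single i (1:ℝ))

/-- The divergence: the sum of the partial derivatives of the components. -/
def divg {d : ℕ} (F : EuclideanSpace ℝ (Fin d) → EuclideanSpace ℝ (Fin d))
    (x : EuclideanSpace ℝ (Fin d)) : ℝ :=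
  ∑ i, fderiv ℝ (fun y => ⟪F y, EuclideanSpace.single i (1:ℝ)⟫) x
    (EuclideanSpace.single i (1:ℝ))

/-- Coordinates of the gradient are the partial derivatives. -/
lemma gradient_coord {d : ℕ} (f : EuclideanSpace ℝ (Fin d) → ℝ)
    (z : EuclideanSpace ℝ (Fin d)) (j : Fin d) :
    gradient f z j = fderiv ℝ f z (EuclideanSpace.single j 1) := by
  have h := InnerProductSpace.toDual_symm_apply (𝕜 := ℝ)
    (y := fderiv ℝ f z) (x := (EuclideanSpace.single j (1:ℝ) : EuclideanSpace ℝ (Fin d)))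
  rw [EuclideanSpace.inner_single_right] at h
  simpa [gradient] using h

lemma norm_sq_eq_sum {d : ℕ} (y : EuclideanSpace ℝ (Fin d)) :
    ‖y‖ ^ 2 = ∑ j, y j * y j := by
  rw [EuclideanSpace.norm_eq, Real.sq_sqrt (Finset.sum_nonneg fun i _ => sq_nonneg _)]
  simp only [Real.norm_eq_abs, sq_abs, sq, abs_mul_abs_self]

local notation "e" j => (EuclideanSpace.single j (1:ℝ))

set_option maxHeartbeats 2000000 in
theorem divergence_identity_unequal_energies
    (d : ℕ) (hd : 2 ≤ d) (Ω : Set (EuclideanSpace ℝ (Fin d))) (hΩ : IsOpen Ω)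
    (u v : EuclideanSpace ℝ (Fin d) → ℝ) (Eu Ev : ℝ) (hne : Eu ≠ Ev)
    (hu : ContDiffOn ℝ 2 u Ω) (hv : ContDiffOn ℝ 2 v Ω)
    (hHu : ∀ x ∈ Ω, -lap u x = Eu * u x) (hHv : ∀ x ∈ Ω, -lap v x = Ev * v x) :
    ∀ x ∈ Ω,
      divg (fun y =>
          (((d : ℝ) - 2) / 2) • (v y • gradient u y + u y • gradient v y)
          + ((Eu + Ev) / (Eu - Ev) - (Eu - Ev) / 4 * ‖y‖ ^ 2) •
              (v y • gradient u y - u y • gradient v y)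
          + ((Eu + Ev) / 2 * u y * v y - ⟪gradient u y, gradient v y⟫) • y
          + ⟪y, gradient u y⟫ • gradient v y + ⟪y, gradient v y⟫ • gradient u y) x
        = (Eu - Ev) ^ 2 / 4 * ‖x‖ ^ 2 * u x * v x := by
  intro x hx
  have hεne : Eu - Ev ≠ 0 := sub_ne_zero.mpr hne
  -- regularity facts at x
  have hu2 : ContDiffAt ℝ 2 u x := hu.contDiffAt (hΩ.mem_nhds hx)
  have hv2 : ContDiffAt ℝ 2 v x := hv.contDiffAt (hΩ.mem_nhds hx)
  have hdfu : DifferentiableAt ℝ (fderiv ℝ u) x :=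
    (hu2.fderiv_right (m := 1) le_rfl).differentiableAt one_ne_zero
  have hdfv : DifferentiableAt ℝ (fderiv ℝ v) x :=
    (hv2.fderiv_right (m := 1) le_rfl).differentiableAt one_ne_zero
  have hU : HasFDerivAt u (fderiv ℝ u x) x := (hu2.differentiableAt two_ne_zero).hasFDerivAt
  have hV : HasFDerivAt v (fderiv ℝ v x) x := (hv2.differentiableAt two_ne_zero).hasFDerivAt
  set A := fderiv ℝ (fderiv ℝ u) x with hA
  set B := fderiv ℝ (fderiv ℝ v) x with hB
  have symmA : ∀ w z, A w z = A z w := (hu2.isSymmSndFDerivAt (by simp [minSmoothness_of_isRCLikeNormedField])).eq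
  have symmB : ∀ w z, B w z = B z w := (hv2.isSymmSndFDerivAt (by simp [minSmoothness_of_isRCLikeNormedField])).eq
  have hp : ∀ j : Fin d, HasFDerivAt (fun y => fderiv ℝ u y (e j)) (A.flip (e j)) x := by
    intro j
    have h2 := hdfu.hasFDerivAt.clm_apply
      (hasFDerivAt_const (e j : EuclideanSpace ℝ (Fin d)) x)
    simpa using h2
  have hq : ∀ j : Fin d, HasFDerivAt (fun y => fderiv ℝ v y (e j)) (B.flip (e j)) x := by
    intro j
    have h2 := hdfv.hasFDerivAt.clm_apply
      (hasFDerivAt_const (e j : EuclideanSpace ℝ (Fin d)) x)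
    simpa using h2
  have hc : ∀ j : Fin d, HasFDerivAt (fun y : EuclideanSpace ℝ (Fin d) => y j)
      (PiLp.proj (𝕜 := ℝ) 2 (fun _ : Fin d => ℝ) j) x :=
    fun j => (PiLp.proj (𝕜 := ℝ) 2 (fun _ : Fin d => ℝ) j).hasFDerivAt
  -- Laplacian values
  have hLapU : ∑ i, A (e i) (e i) = -(Eu * u x) := by
    have h1 := hHu x hx
    have h2 : lap u x = ∑ i, A (e i) (e i) := by
      rw [lap]
      exact Finset.sum_congr rfl fun i _ => by rw [(hp i).fderiv]; simp
    rw [← h2]; linarith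
  have hLapV : ∑ i, B (e i) (e i) = -(Ev * v x) := by
    have h1 := hHv x hx
    have h2 : lap v x = ∑ i, B (e i) (e i) := by
      rw [lap]
      exact Finset.sum_congr rfl fun i _ => by rw [(hq i).fderiv]; simp
    rw [← h2]; linarith
  -- the per-coordinate derivative computation
  have key : ∀ i : Fin d, fderiv ℝ (fun y =>
      ⟪(((d : ℝ) - 2) / 2) • (v y • gradient u y + u y • gradient v y)
        + ((Eu + Ev) / (Eu - Ev) - (Eu - Ev) / 4 * ‖y‖ ^ 2) •
            (v y • gradient u y - u y • gradient v y)
        + ((Eu + Ev) / 2 * u y * v y - ⟪gradient u y, gradient v y⟫) • y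
        + ⟪y, gradient u y⟫ • gradient v y + ⟪y, gradient v y⟫ • gradient u y,
        (e i)⟫) x (e i)
      = ((d:ℝ)-2)/2 * v x * A (e i) (e i) + ((d:ℝ)-2)/2 * u x * B (e i) (e i)
        + ((d:ℝ)-2) * (fderiv ℝ u x (e i) * fderiv ℝ v x (e i))
        + (Eu+Ev)/(Eu-Ev) * (v x * A (e i) (e i)) - (Eu+Ev)/(Eu-Ev) * (u x * B (e i) (e i))
        - (Eu-Ev)/4 * (∑ j, x j * x j) * (v x * A (e i) (e i))
        + (Eu-Ev)/4 * (∑ j, x j * x j) * (u x * B (e i) (e i))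
        - (Eu-Ev)/2 * v x * (x i * fderiv ℝ u x (e i))
        + (Eu-Ev)/2 * u x * (x i * fderiv ℝ v x (e i))
        + (Eu+Ev)/2 * v x * (x i * fderiv ℝ u x (e i))
        + (Eu+Ev)/2 * u x * (x i * fderiv ℝ v x (e i))
        - (∑ j, fderiv ℝ u x (e j) * B (e i) (e j)) * x i
        - (∑ j, fderiv ℝ v x (e j) * A (e i) (e j)) * x i
        + (Eu+Ev)/2 * (u x * v x) - (∑ j, fderiv ℝ u x (e j) * fderiv ℝ v x (e j))
        + 2 * (fderiv ℝ u x (e i) * fderiv ℝ v x (e i))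
        + (∑ j, x j * A (e i) (e j)) * fderiv ℝ v x (e i)
        + (∑ j, x j * B (e i) (e j)) * fderiv ℝ u x (e i)
        + (∑ j, x j * fderiv ℝ u x (e j)) * B (e i) (e i)
        + (∑ j, x j * fderiv ℝ v x (e j)) * A (e i) (e i) := by
    intro i
    have hfun : (fun y =>
        ⟪(((d : ℝ) - 2) / 2) • (v y • gradient u y + u y • gradient v y)
          + ((Eu + Ev) / (Eu - Ev) - (Eu - Ev) / 4 * ‖y‖ ^ 2) •
              (v y • gradient u y - u y • gradient v y)
          + ((Eu + Ev) / 2 * u y * v y - ⟪gradient u y, gradient v y⟫) • y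
          + ⟪y, gradient u y⟫ • gradient v y + ⟪y, gradient v y⟫ • gradient u y,
          (e i)⟫)
        = (fun y =>
          (((d:ℝ) - 2) / 2) * (v y * fderiv ℝ u y (e i) + u y * fderiv ℝ v y (e i))
          + ((Eu + Ev) / (Eu - Ev) - (Eu - Ev) / 4 * ∑ j, y j * y j) *
              (v y * fderiv ℝ u y (e i) - u y * fderiv ℝ v y (e i))
          + ((Eu + Ev) / 2 * u y * v y - ∑ j, fderiv ℝ u y (e j) * fderiv ℝ v y (e j)) * y i
          + (∑ j, y j * fderiv ℝ u y (e j)) * fderiv ℝ v y (e i)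
          + (∑ j, y j * fderiv ℝ v y (e j)) * fderiv ℝ u y (e i)) := by
      funext y
      simp only [gradient_coord, norm_sq_eq_sum, PiLp.inner_apply, RCLike.inner_apply,
        conj_trivial, PiLp.add_apply, PiLp.sub_apply, PiLp.smul_apply, smul_eq_mul,
        EuclideanSpace.single_apply, mul_ite, mul_one, mul_zero,
        Finset.sum_ite_eq', Finset.mem_univ, if_true]
      simp only [ite_mul, one_mul, zero_mul, Finset.sum_ite_eq', Finset.mem_univ, if_true,
        mul_comm (fderiv ℝ v y _) (fderiv ℝ u y _), mul_comm (fderiv ℝ u y _) (y _),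
        mul_comm (fderiv ℝ v y _) (y _)]
    rw [hfun]
    have hT1 := ((hV.mul (hp i)).add (hU.mul (hq i))).const_mul (((d:ℝ) - 2) / 2)
    have hT2 := ((hasFDerivAt_const ((Eu+Ev)/(Eu-Ev)) x).sub
      ((HasFDerivAt.fun_sum (u := Finset.univ) (fun j _ => (hc j).mul (hc j))).const_mul
        ((Eu-Ev)/4))).mul ((hV.mul (hp i)).sub (hU.mul (hq i)))
    have hT3 := (((hU.const_mul ((Eu+Ev)/2)).mul hV).sub
      (HasFDerivAt.fun_sum (u := Finset.univ) (fun j _ => (hp j).mul (hq j)))).mul (hc i)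
    have hT4 := (HasFDerivAt.fun_sum (u := Finset.univ) (fun j _ => (hc j).mul (hp j))).mul (hq i)
    have hT5 := (HasFDerivAt.fun_sum (u := Finset.univ) (fun j _ => (hc j).mul (hq j))).mul (hp i)
    erw [((((hT1.add hT2).add hT3).add hT4).add hT5).fderiv]
    simp only [ContinuousLinearMap.add_apply, ContinuousLinearMap.coe_smul', Pi.smul_apply,
      ContinuousLinearMap.smul_apply, ContinuousLinearMap.sub_apply, ContinuousLinearMap.coe_sub',
      Pi.sub_apply, ContinuousLinearMap.coe_sum', Finset.sum_apply, Pi.mul_apply, Pi.add_apply,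
      ContinuousLinearMap.flip_apply, smul_eq_mul, PiLp.proj_apply,
      ContinuousLinearMap.zero_apply, EuclideanSpace.single_apply, mul_ite, mul_one, mul_zero,
      ite_mul, zero_mul, one_mul, Finset.sum_add_distrib, Finset.sum_ite_eq, Finset.sum_ite_eq',
      Finset.mem_univ, if_true]
    ring
  -- symmetry swaps
  have hswapA : ∑ i : Fin d, (∑ j : Fin d, fderiv ℝ v x (e j) * A (e i) (e j)) * x i
      = ∑ i : Fin d, (∑ j : Fin d, x j * A (e i) (e j)) * fderiv ℝ v x (e i) := by
    calc ∑ i : Fin d, (∑ j : Fin d, fderiv ℝ v x (e j) * A (e i) (e j)) * x i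
        = ∑ i : Fin d, ∑ j : Fin d, fderiv ℝ v x (e j) * A (e j) (e i) * x i :=
          Finset.sum_congr rfl fun i _ => by
            rw [Finset.sum_mul]
            exact Finset.sum_congr rfl fun j _ => by rw [symmA]
      _ = ∑ j : Fin d, ∑ i : Fin d, fderiv ℝ v x (e j) * A (e j) (e i) * x i :=
          Finset.sum_comm
      _ = ∑ i : Fin d, (∑ j : Fin d, x j * A (e i) (e j)) * fderiv ℝ v x (e i) :=
          Finset.sum_congr rfl fun i _ => by
            rw [Finset.sum_mul]
            exact Finset.sum_congr rfl fun j _ => by ring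
  have hswapB : ∑ i : Fin d, (∑ j : Fin d, fderiv ℝ u x (e j) * B (e i) (e j)) * x i
      = ∑ i : Fin d, (∑ j : Fin d, x j * B (e i) (e j)) * fderiv ℝ u x (e i) := by
    calc ∑ i : Fin d, (∑ j : Fin d, fderiv ℝ u x (e j) * B (e i) (e j)) * x i
        = ∑ i : Fin d, ∑ j : Fin d, fderiv ℝ u x (e j) * B (e j) (e i) * x i :=
          Finset.sum_congr rfl fun i _ => by
            rw [Finset.sum_mul]
            exact Finset.sum_congr rfl fun j _ => by rw [symmB]
      _ = ∑ j : Fin d, ∑ i : Fin d, fderiv ℝ u x (e j) * B (e j) (e i) * x i :=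
          Finset.sum_comm
      _ = ∑ i : Fin d, (∑ j : Fin d, x j * B (e i) (e j)) * fderiv ℝ u x (e i) :=
          Finset.sum_congr rfl fun i _ => by
            rw [Finset.sum_mul]
            exact Finset.sum_congr rfl fun j _ => by ring
  have hdg : divg (fun y =>
      (((d : ℝ) - 2) / 2) • (v y • gradient u y + u y • gradient v y)
      + ((Eu + Ev) / (Eu - Ev) - (Eu - Ev) / 4 * ‖y‖ ^ 2) •
          (v y • gradient u y - u y • gradient v y)
      + ((Eu + Ev) / 2 * u y * v y - ⟪gradient u y, gradient v y⟫) • y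
      + ⟪y, gradient u y⟫ • gradient v y + ⟪y, gradient v y⟫ • gradient u y) x
      = ∑ i : Fin d,
      (((d:ℝ)-2)/2 * v x * A (e i) (e i) + ((d:ℝ)-2)/2 * u x * B (e i) (e i)
        + ((d:ℝ)-2) * (fderiv ℝ u x (e i) * fderiv ℝ v x (e i))
        + (Eu+Ev)/(Eu-Ev) * (v x * A (e i) (e i)) - (Eu+Ev)/(Eu-Ev) * (u x * B (e i) (e i))
        - (Eu-Ev)/4 * (∑ j, x j * x j) * (v x * A (e i) (e i))
        + (Eu-Ev)/4 * (∑ j, x j * x j) * (u x * B (e i) (e i))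
        - (Eu-Ev)/2 * v x * (x i * fderiv ℝ u x (e i))
        + (Eu-Ev)/2 * u x * (x i * fderiv ℝ v x (e i))
        + (Eu+Ev)/2 * v x * (x i * fderiv ℝ u x (e i))
        + (Eu+Ev)/2 * u x * (x i * fderiv ℝ v x (e i))
        - (∑ j, fderiv ℝ u x (e j) * B (e i) (e j)) * x i
        - (∑ j, fderiv ℝ v x (e j) * A (e i) (e j)) * x i
        + (Eu+Ev)/2 * (u x * v x) - (∑ j, fderiv ℝ u x (e j) * fderiv ℝ v x (e j))
        + 2 * (fderiv ℝ u x (e i) * fderiv ℝ v x (e i))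
        + (∑ j, x j * A (e i) (e j)) * fderiv ℝ v x (e i)
        + (∑ j, x j * B (e i) (e j)) * fderiv ℝ u x (e i)
        + (∑ j, x j * fderiv ℝ u x (e j)) * B (e i) (e i)
        + (∑ j, x j * fderiv ℝ v x (e j)) * A (e i) (e i)) := by
    simp only [divg]
    exact Finset.sum_congr rfl fun i _ => key i
  rw [hdg, norm_sq_eq_sum]
  simp only [Finset.sum_add_distrib, Finset.sum_sub_distrib, ← Finset.mul_sum,
    Finset.sum_const, Finset.card_univ, Fintype.card_fin, nsmul_eq_mul]
  rw [hswapA, hswapB, hLapU, hLapV]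
  field_simp
  ring
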